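/- (Multi-layer perturbation propagation, Neyshabur et al. form.) Let f_w be an L-layer ReLU network with weights W₁,…,W_L, and let H₁,…,H_L be perturbation matrices with ‖H_i‖₂ ≤ (1/L)‖W_i‖₂ for all i. Then for all x with ‖x‖₂ ≤ D, ‖f_{w}(x) − f_{w+h}(x)‖₂ ≤ e·D·(∏_i‖W_i‖₂)·Σ_i ‖H_i‖₂/‖W_i‖₂. -/

import Mathlib

noncomputable section

/-- Entrywise ReLU on `ℝ^n`. -/
def reluV {n : ℕ} (v : EuclideanSpace ℝ (Fin n)) : EuclideanSpace ℝ (Fin n) :=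
  WithLp.toLp 2 (fun i => max 0 (v i))

/-- A composition of ReLU layers `z ↦ ρ(W z)`. -/
def net (dims : ℕ → ℕ)
    (W : ∀ i : ℕ, EuclideanSpace ℝ (Fin (dims i)) →L[ℝ] EuclideanSpace ℝ (Fin (dims (i + 1)))) :
    (L : ℕ) → EuclideanSpace ℝ (Fin (dims 0)) → EuclideanSpace ℝ (Fin (dims L))
  | 0 => id
  | (L + 1) => fun x => reluV (W L (net dims W L x))

lemma relu_lip {n : ℕ} (u v : EuclideanSpace ℝ (Fin n)) :
    ‖reluV u - reluV v‖ ≤ ‖u - v‖ := by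
  rw [EuclideanSpace.norm_eq, EuclideanSpace.norm_eq]
  apply Real.sqrt_le_sqrt
  apply Finset.sum_le_sum
  intro i _
  have h1 : (reluV u - reluV v) i = max (u i) 0 - max (v i) 0 := by
    simp [reluV, max_comm]
  have h2 : (u - v) i = u i - v i := rfl
  rw [h1, h2, Real.norm_eq_abs, Real.norm_eq_abs]
  exact pow_le_pow_left₀ (abs_nonneg _) (abs_max_sub_max_le_abs (u i) (v i) 0) 2

lemma relu_norm {n : ℕ} (u : EuclideanSpace ℝ (Fin n)) : ‖reluV u‖ ≤ ‖u‖ := by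
  have h0 : reluV (0 : EuclideanSpace ℝ (Fin n)) = 0 := by
    ext i; simp [reluV]
  simpa [h0] using relu_lip u 0

/-- Neyshabur et al. perturbation bound: if each perturbation
satisfies `‖Hᵢ‖₂ ≤ (1/L)‖Wᵢ‖₂`, then for every input of norm at most `D`,
`‖f_w(x) − f_{w+h}(x)‖₂ ≤ e·D·(∏ᵢ‖Wᵢ‖₂)·Σᵢ ‖Hᵢ‖₂/‖Wᵢ‖₂`. -/
theorem stmt16 (dims : ℕ → ℕ) (L : ℕ)
    (W H : ∀ i : ℕ, EuclideanSpace ℝ (Fin (dims i)) →L[ℝ] EuclideanSpace ℝ (Fin (dims (i + 1))))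
    (hH : ∀ i < L, ‖H i‖ ≤ (1 / (L : ℝ)) * ‖W i‖)
    (D : ℝ) (x : EuclideanSpace ℝ (Fin (dims 0))) (hx : ‖x‖ ≤ D) :
    ‖net dims W L x - net dims (fun i => W i + H i) L x‖ ≤
      Real.exp 1 * D * (∏ i ∈ Finset.range L, ‖W i‖) *
        ∑ i ∈ Finset.range L, ‖H i‖ / ‖W i‖ := by
  have hD : 0 ≤ D := le_trans (norm_nonneg x) hx
  set c : ℝ := 1 + 1 / (L : ℝ) with hc
  clear_value c
  have hc1 : (1 : ℝ) ≤ c := by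
    rw [hc]
    have : (0:ℝ) ≤ 1 / (L:ℝ) := by positivity
    linarith
  have hc0 : (0 : ℝ) ≤ c := by linarith
  -- norm bound for perturbed net
  have hnorm : ∀ k, k ≤ L →
      ‖net dims (fun i => W i + H i) k x‖ ≤ c ^ k * (∏ i ∈ Finset.range k, ‖W i‖) * D := by
    intro k
    induction k with
    | zero => intro _; simpa [net] using hx
    | succ k ih =>
      intro hkL
      have hk : k ≤ L := Nat.le_of_succ_le hkL
      have ihk := ih hk
      have hHk := hH k (Nat.lt_of_succ_le hkL)
      set y := net dims (fun i => W i + H i) k x with hy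
      have step : net dims (fun i => W i + H i) (k+1) x = reluV ((W k + H k) y) := rfl
      rw [step]
      calc ‖reluV ((W k + H k) y)‖ ≤ ‖(W k + H k) y‖ := relu_norm _
        _ ≤ ‖W k + H k‖ * ‖y‖ := (W k + H k).le_opNorm y
        _ ≤ (c * ‖W k‖) * (c ^ k * (∏ i ∈ Finset.range k, ‖W i‖) * D) := by
            apply mul_le_mul _ ihk (norm_nonneg y) (by positivity)
            calc ‖W k + H k‖ ≤ ‖W k‖ + ‖H k‖ := norm_add_le _ _
              _ ≤ ‖W k‖ + 1 / (L:ℝ) * ‖W k‖ := by linarith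
              _ = c * ‖W k‖ := by rw [hc]; ring
        _ = c ^ (k+1) * (∏ i ∈ Finset.range (k+1), ‖W i‖) * D := by
            rw [Finset.prod_range_succ]; ring
  -- difference bound
  have hdiff : ∀ k, k ≤ L →
      ‖net dims W k x - net dims (fun i => W i + H i) k x‖ ≤
        c ^ k * D * (∏ i ∈ Finset.range k, ‖W i‖) * ∑ i ∈ Finset.range k, ‖H i‖ / ‖W i‖ := by
    intro k
    induction k with
    | zero => intro _; simp [net]
    | succ k ih =>
      intro hkL
      have hk : k ≤ L := Nat.le_of_succ_le hkL
      have ihk := ih hk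
      have hHk := hH k (Nat.lt_of_succ_le hkL)
      set y := net dims W k x with hy
      set y' := net dims (fun i => W i + H i) k x with hy'
      have hnormy' : ‖y'‖ ≤ c ^ k * (∏ i ∈ Finset.range k, ‖W i‖) * D := hnorm k hk
      have key : ‖H k‖ = ‖H k‖ / ‖W k‖ * ‖W k‖ := by
        rcases eq_or_ne ‖W k‖ 0 with h0 | h0
        · have : ‖H k‖ ≤ 0 := by rw [h0] at hHk; linarith
          have : ‖H k‖ = 0 := le_antisymm this (norm_nonneg _)
          simp [this, h0]
        · rw [div_mul_cancel₀ _ h0]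
      have step : net dims W (k+1) x - net dims (fun i => W i + H i) (k+1) x =
          reluV (W k y) - reluV ((W k + H k) y') := rfl
      rw [step]
      have hWy : W k y - (W k + H k) y' = W k (y - y') - H k y' := by
        simp only [ContinuousLinearMap.add_apply, map_sub]
        abel
      calc ‖reluV (W k y) - reluV ((W k + H k) y')‖
          ≤ ‖W k y - (W k + H k) y'‖ := relu_lip _ _
        _ = ‖W k (y - y') - H k y'‖ := by rw [hWy]
        _ ≤ ‖W k (y - y')‖ + ‖H k y'‖ := norm_sub_le _ _
        _ ≤ ‖W k‖ * ‖y - y'‖ + ‖H k‖ * ‖y'‖ := by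
            gcongr
            · exact (W k).le_opNorm _
            · exact (H k).le_opNorm _
        _ ≤ ‖W k‖ * (c ^ k * D * (∏ i ∈ Finset.range k, ‖W i‖) *
              ∑ i ∈ Finset.range k, ‖H i‖ / ‖W i‖) +
            ‖H k‖ * (c ^ k * (∏ i ∈ Finset.range k, ‖W i‖) * D) := by
            gcongr <;> positivity
        _ = c ^ k * D * (∏ i ∈ Finset.range (k+1), ‖W i‖) *
              (∑ i ∈ Finset.range k, ‖H i‖ / ‖W i‖ + ‖H k‖ / ‖W k‖) := by
            rw [Finset.prod_range_succ]
            nth_rewrite 1 [key]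
            ring
        _ = c ^ k * D * (∏ i ∈ Finset.range (k+1), ‖W i‖) *
              ∑ i ∈ Finset.range (k+1), ‖H i‖ / ‖W i‖ := by
            rw [Finset.sum_range_succ]
        _ ≤ c ^ (k+1) * D * (∏ i ∈ Finset.range (k+1), ‖W i‖) *
              ∑ i ∈ Finset.range (k+1), ‖H i‖ / ‖W i‖ := by
            have hs : (0:ℝ) ≤ ∑ i ∈ Finset.range (k+1), ‖H i‖ / ‖W i‖ :=
              Finset.sum_nonneg fun i _ => div_nonneg (norm_nonneg _) (norm_nonneg _)
            have hcp : c ^ k ≤ c ^ (k+1) := pow_le_pow_right₀ hc1 (Nat.le_succ k)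
            have hp : (0:ℝ) ≤ ∏ i ∈ Finset.range (k+1), ‖W i‖ :=
              Finset.prod_nonneg fun i _ => norm_nonneg _
            gcongr
  have hfin := hdiff L le_rfl
  have hce : c ^ L ≤ Real.exp 1 := by
    rcases Nat.eq_zero_or_pos L with h0 | hpos
    · subst h0; simpa using Real.one_le_exp (by norm_num)
    · have h1 : c ≤ Real.exp (1 / (L:ℝ)) := by
        have := Real.add_one_le_exp (1 / (L:ℝ))
        linarith
      calc c ^ L ≤ (Real.exp (1 / (L:ℝ))) ^ L := pow_le_pow_left₀ hc0 h1 L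
        _ = Real.exp ((L:ℝ) * (1 / (L:ℝ))) := by rw [← Real.exp_nat_mul]
        _ = Real.exp 1 := by
            congr 1
            field_simp
  refine le_trans hfin ?_
  have hs : (0:ℝ) ≤ ∑ i ∈ Finset.range L, ‖H i‖ / ‖W i‖ :=
    Finset.sum_nonneg fun i _ => div_nonneg (norm_nonneg _) (norm_nonneg _)
  have hp : (0:ℝ) ≤ ∏ i ∈ Finset.range L, ‖W i‖ :=
    Finset.prod_nonneg fun i _ => norm_nonneg _
  gcongr
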